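/- arXiv:2405.11590 — 2 statements merged into one kernel-verified Lean document; each statement's English description precedes it below -/
import Mathlib

section
/- Let ε ∈ (0, 3/4) and let f : ℝ^{d×r} → ℝ be differentiable with ‖∇f(u) − ∇f(v)‖_F ≤ L̂‖u − v‖_F for all u, v ∈ ℝ^{d×r} and ‖∇f(u)‖_F ≤ L̂ for all u ∈ St(d,r)^ε. Then for every x ∈ St(d,r)^ε with x' = Proj_St(x), the relative gradient satisfies ‖grad f(x) − grad f(x')‖_F ≤ (3 + 2ε) L̂ ‖x − x'‖_F. -/
open Matrix BigOperators Finset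

noncomputable section

namespace DRFGT

/-- Frobenius inner product `⟨A, B⟩ = Tr (A Bᵀ)`. -/
def finner {m k : Type*} [Fintype m] [Fintype k] (A B : Matrix m k ℝ) : ℝ :=
  Matrix.trace (A * Bᵀ)

/-- Frobenius norm `‖A‖_F = √⟨A, A⟩`. -/
def fnorm {m k : Type*} [Fintype m] [Fintype k] (A : Matrix m k ℝ) : ℝ :=
  Real.sqrt (finner A A)

/-- Skew part of a square matrix, `skew(A) = (A − Aᵀ)/2`. -/
def mskew {m : Type*} [Fintype m] (A : Matrix m m ℝ) : Matrix m m ℝ :=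
  (2 : ℝ)⁻¹ • (A - Aᵀ)

/-- Symmetric part of a square matrix, `sym(A) = (A + Aᵀ)/2`. -/
def msym {m : Type*} [Fintype m] (A : Matrix m m ℝ) : Matrix m m ℝ :=
  (2 : ℝ)⁻¹ • (A + Aᵀ)

/-- Relative (Riemannian) gradient `grad f(x) = skew(∇f(x) xᵀ) x`, where `Df` denotes the
Euclidean gradient `∇f` of `f`. -/
def rgrad {d r : ℕ} (Df : Matrix (Fin d) (Fin r) ℝ → Matrix (Fin d) (Fin r) ℝ)
    (x : Matrix (Fin d) (Fin r) ℝ) : Matrix (Fin d) (Fin r) ℝ :=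
  mskew (Df x * xᵀ) * x

/-- Landing field `Λ(x) = grad f(x) + λ x (xᵀ x − I_r)`. -/
def landing {d r : ℕ} (Df : Matrix (Fin d) (Fin r) ℝ → Matrix (Fin d) (Fin r) ℝ) (lam : ℝ)
    (x : Matrix (Fin d) (Fin r) ℝ) : Matrix (Fin d) (Fin r) ℝ :=
  rgrad Df x + lam • (x * (xᵀ * x - 1))

/-- The Stiefel manifold `St(d,r) = {x : xᵀ x = I_r}`. -/
def St (d r : ℕ) : Set (Matrix (Fin d) (Fin r) ℝ) := {x | xᵀ * x = 1}

/-- The safety region `St(d,r)^ε = {x : ‖xᵀ x − I_r‖_F ≤ ε}`. -/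
def StEps (d r : ℕ) (ε : ℝ) : Set (Matrix (Fin d) (Fin r) ℝ) :=
  {x | fnorm (xᵀ * x - 1) ≤ ε}

/-- The merit function `𝓛(x) = f(x) − ½⟨sym(xᵀ∇f(x)), xᵀx − I_r⟩ + γ·¼‖xᵀx − I_r‖_F²`. -/
def merit {d r : ℕ} (f : Matrix (Fin d) (Fin r) ℝ → ℝ)
    (Df : Matrix (Fin d) (Fin r) ℝ → Matrix (Fin d) (Fin r) ℝ) (γ : ℝ)
    (x : Matrix (Fin d) (Fin r) ℝ) : ℝ :=
  f x - (2 : ℝ)⁻¹ * finner (msym (xᵀ * Df x)) (xᵀ * x - 1)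
    + γ * (4 : ℝ)⁻¹ * fnorm (xᵀ * x - 1) ^ 2

/-- The gradient of the merit function at on-manifold points:
`∇𝓛(x) = ∇f(x) − x · sym(xᵀ∇f(x))` for `x ∈ St(d,r)`. -/
def meritGradSt {d r : ℕ} (Df : Matrix (Fin d) (Fin r) ℝ → Matrix (Fin d) (Fin r) ℝ)
    (x : Matrix (Fin d) (Fin r) ℝ) : Matrix (Fin d) (Fin r) ℝ :=
  Df x - x * msym (xᵀ * Df x)

/-- `x'` is the polar factor of a full-column-rank `x`, i.e. the projection `Proj_St(x)` of `x`
onto the Stiefel manifold: if `x = U S Vᵀ` is a thin SVD then `x' = U Vᵀ`, equivalently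
`x'ᵀ x' = I_r` and `x = x' P` for a positive definite `P` (namely `P = V S Vᵀ`). -/
def IsPolarFactor {d r : ℕ} (x x' : Matrix (Fin d) (Fin r) ℝ) : Prop :=
  x'ᵀ * x' = 1 ∧ ∃ P : Matrix (Fin r) (Fin r) ℝ, P.PosDef ∧ x = x' * P

/-- Frobenius distance from `x` to a set `S`: `dist(S,x) = inf_{y ∈ S} ‖x − y‖_F`. -/
def fdist {d r : ℕ} (S : Set (Matrix (Fin d) (Fin r) ℝ)) (x : Matrix (Fin d) (Fin r) ℝ) : ℝ :=
  sInf ((fun y => fnorm (x - y)) '' S)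

/-- Network average `z̄ = (1/n) Σᵢ zᵢ`. -/
def avg {n d r : ℕ} (z : Fin n → Matrix (Fin d) (Fin r) ℝ) : Matrix (Fin d) (Fin r) ℝ :=
  (n : ℝ)⁻¹ • ∑ i, z i

/-- Frobenius norm of a stacked family: `‖𝐳‖_F = (Σᵢ ‖zᵢ‖_F²)^{1/2}`. -/
def snorm {n d r : ℕ} (z : Fin n → Matrix (Fin d) (Fin r) ℝ) : ℝ :=
  Real.sqrt (∑ i, fnorm (z i) ^ 2)


section Aux

attribute [local instance] Matrix.frobeniusSeminormedAddCommGroup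
  Matrix.frobeniusNormedAddCommGroup Matrix.frobeniusNormedSpace
  Matrix.frobeniusIsBoundedSMul

set_option linter.unusedSectionVars false

variable {m k p q : Type*} [Fintype m] [Fintype k] [Fintype p] [Fintype q]
  [DecidableEq m] [DecidableEq k] [DecidableEq p] [DecidableEq q]

lemma finner_eq_sum (A B : Matrix m k ℝ) : finner A B = ∑ i, ∑ j, A i j * B i j := by
  simp [finner, Matrix.trace, Matrix.mul_apply, Matrix.diag]

lemma finner_self_nonneg (A : Matrix m k ℝ) : 0 ≤ finner A A := by
  rw [finner_eq_sum]
  exact Finset.sum_nonneg fun i _ => Finset.sum_nonneg fun j _ => mul_self_nonneg _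

lemma fnorm_nonneg (A : Matrix m k ℝ) : 0 ≤ fnorm A := Real.sqrt_nonneg _

lemma fnorm_sq (A : Matrix m k ℝ) : fnorm A ^ 2 = finner A A :=
  Real.sq_sqrt (finner_self_nonneg A)

lemma fnorm_eq_norm (A : Matrix m k ℝ) : fnorm A = ‖A‖ := by
  rw [Matrix.frobenius_norm_def, fnorm, finner_eq_sum, Real.sqrt_eq_rpow]
  have h : ∀ i j, ‖A i j‖ ^ (2:ℝ) = A i j * A i j := fun i j => by
    rw [show ((2 : ℝ) = ((2 : ℕ) : ℝ)) by norm_num, Real.rpow_natCast,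
      Real.norm_eq_abs, sq_abs, sq]
  simp_rw [h]

lemma fnorm_zero : fnorm (0 : Matrix m k ℝ) = 0 := by
  rw [fnorm_eq_norm, norm_zero]

lemma fnorm_add_le (A B : Matrix m k ℝ) : fnorm (A + B) ≤ fnorm A + fnorm B := by
  simp only [fnorm_eq_norm]; exact norm_add_le _ _

lemma fnorm_sub_le (A B : Matrix m k ℝ) : fnorm (A - B) ≤ fnorm A + fnorm B := by
  simp only [fnorm_eq_norm]; exact norm_sub_le _ _

lemma fnorm_mul_le (A : Matrix m k ℝ) (B : Matrix k p ℝ) :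
    fnorm (A * B) ≤ fnorm A * fnorm B := by
  simp only [fnorm_eq_norm]; exact Matrix.frobenius_norm_mul A B

lemma fnorm_transpose (A : Matrix m k ℝ) : fnorm Aᵀ = fnorm A := by
  simp only [fnorm_eq_norm]; exact Matrix.frobenius_norm_transpose A

lemma fnorm_smul (c : ℝ) (A : Matrix m k ℝ) : fnorm (c • A) = |c| * fnorm A := by
  simp only [fnorm_eq_norm]; rw [norm_smul, Real.norm_eq_abs]

lemma fnorm_mskew_le (A : Matrix m m ℝ) : fnorm (mskew A) ≤ fnorm A := by
  rw [mskew, fnorm_smul]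
  have h := fnorm_sub_le A Aᵀ
  rw [fnorm_transpose] at h
  rw [abs_of_pos (by norm_num : (0:ℝ) < (2:ℝ)⁻¹)]
  linarith

lemma mskew_sub (A B : Matrix m m ℝ) : mskew A - mskew B = mskew (A - B) := by
  simp only [mskew, Matrix.transpose_sub]
  rw [← smul_sub]
  congr 1
  abel

lemma mskew_add (A B : Matrix m m ℝ) : mskew (A + B) = mskew A + mskew B := by
  simp only [mskew, Matrix.transpose_add]
  rw [← smul_add]
  congr 1
  abel

lemma conjT (A : Matrix m k ℝ) : Aᴴ = Aᵀ :=
  Matrix.conjTranspose_eq_transpose_of_trivial A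

lemma trace_transpose_mul_self_nonneg (A : Matrix m k ℝ) :
    0 ≤ Matrix.trace (Aᵀ * A) := by
  rw [Matrix.trace_mul_comm]
  simpa [finner] using finner_self_nonneg A

lemma trace_mul_nonneg {M N : Matrix k k ℝ} (hM : M.PosSemidef) (hN : N.PosSemidef) :
    0 ≤ Matrix.trace (M * N) := by
  classical
  obtain ⟨B, rfl⟩ : ∃ B : Matrix k k ℝ, M = Bᴴ * B := by
    open scoped MatrixOrder in
    obtain ⟨B, hB⟩ := CStarAlgebra.nonneg_iff_eq_star_mul_self.mp hM.nonneg
    exact ⟨B, hB⟩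
  obtain ⟨C, rfl⟩ : ∃ C : Matrix k k ℝ, N = Cᴴ * C := by
    open scoped MatrixOrder in
    obtain ⟨C, hC⟩ := CStarAlgebra.nonneg_iff_eq_star_mul_self.mp hN.nonneg
    exact ⟨C, hC⟩
  rw [conjT, conjT]
  have h0 := trace_transpose_mul_self_nonneg (C * Bᵀ)
  rw [Matrix.transpose_mul, Matrix.transpose_transpose] at h0
  have e : Matrix.trace (Bᵀ * B * (Cᵀ * C)) = Matrix.trace (B * Cᵀ * (C * Bᵀ)) := by
    rw [Matrix.mul_assoc Bᵀ B _, Matrix.trace_mul_comm]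
    congr 1
    simp only [Matrix.mul_assoc]
  rw [e]
  exact h0

lemma quad_le_fnorm (M : Matrix k k ℝ) (v : k → ℝ) :
    v ⬝ᵥ (M *ᵥ v) ≤ fnorm M * (v ⬝ᵥ v) := by
  classical
  have hvv : v ⬝ᵥ v = ∑ i, v i ^ 2 := by
    simp [dotProduct, sq]
  have hv : 0 ≤ v ⬝ᵥ v := by
    rw [hvv]; positivity
  have key : (v ⬝ᵥ (M *ᵥ v)) ^ 2 ≤ (fnorm M * (v ⬝ᵥ v)) ^ 2 := by
    have c1 : (v ⬝ᵥ (M *ᵥ v)) ^ 2 ≤ (∑ i, v i ^ 2) * ∑ i, ((M *ᵥ v) i) ^ 2 := by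
      have := Finset.sum_mul_sq_le_sq_mul_sq Finset.univ v (fun i => (M *ᵥ v) i)
      simpa [dotProduct] using this
    have c2 : ∀ i, ((M *ᵥ v) i) ^ 2 ≤ (∑ j, M i j ^ 2) * ∑ j, v j ^ 2 := fun i => by
      have := Finset.sum_mul_sq_le_sq_mul_sq Finset.univ (fun j => M i j) v
      simpa [Matrix.mulVec, dotProduct] using this
    have c3 : ∑ i, ((M *ᵥ v) i) ^ 2 ≤ ∑ i, (∑ j, M i j ^ 2) * ∑ j, v j ^ 2 :=
      Finset.sum_le_sum fun i _ => c2 i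
    have hfn : fnorm M ^ 2 = ∑ i, ∑ j, M i j ^ 2 := by
      rw [fnorm_sq, finner_eq_sum]; simp [sq]
    have := le_trans c1 (by
      have : (0:ℝ) ≤ ∑ i, v i ^ 2 := by positivity
      exact mul_le_mul_of_nonneg_left c3 this)
    calc (v ⬝ᵥ (M *ᵥ v)) ^ 2
        ≤ (∑ i, v i ^ 2) * ∑ i, (∑ j, M i j ^ 2) * ∑ j, v j ^ 2 := this
      _ = (fnorm M ^ 2) * (∑ i, v i ^ 2) * (∑ j, v j ^ 2) := by
          rw [hfn, ← Finset.sum_mul]; ring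
      _ = (fnorm M * (v ⬝ᵥ v)) ^ 2 := by rw [hvv]; ring
  nlinarith [mul_nonneg (fnorm_nonneg M) hv, key]

lemma psd_shift {ε : ℝ} {X : Matrix k k ℝ} (hX : Xᵀ = X)
    (h : fnorm (X - 1) ≤ ε) : ((1 + ε) • (1 : Matrix k k ℝ) - X).PosSemidef := by
  classical
  refine Matrix.PosSemidef.of_dotProduct_mulVec_nonneg ?_ ?_
  · show ((1 + ε) • (1 : Matrix k k ℝ) - X)ᴴ = _
    rw [conjT, Matrix.transpose_sub, Matrix.transpose_smul, Matrix.transpose_one, hX]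
  · intro v
    have hstar : star v = v := by
      funext i; simp
    rw [hstar]
    have e1 : ((1 + ε) • (1 : Matrix k k ℝ) - X) *ᵥ v = (1 + ε) • v - X *ᵥ v := by
      rw [Matrix.sub_mulVec, Matrix.smul_mulVec, Matrix.one_mulVec]
    rw [e1, dotProduct_sub, dotProduct_smul]
    have e2 : X *ᵥ v = (X - 1) *ᵥ v + v := by
      rw [Matrix.sub_mulVec, Matrix.one_mulVec]; abel
    rw [e2, dotProduct_add]
    have h1 : v ⬝ᵥ ((X - 1) *ᵥ v) ≤ fnorm (X - 1) * (v ⬝ᵥ v) := quad_le_fnorm _ _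
    have hv : 0 ≤ v ⬝ᵥ v := by
      have : v ⬝ᵥ v = ∑ i, v i ^ 2 := by simp [dotProduct, sq]
      rw [this]; positivity
    have h2 : fnorm (X - 1) * (v ⬝ᵥ v) ≤ ε * (v ⬝ᵥ v) := mul_le_mul_of_nonneg_right h hv
    have : (1 + ε) • (v ⬝ᵥ v) = (1 + ε) * (v ⬝ᵥ v) := rfl
    rw [this]
    nlinarith

lemma psd_one_sub_proj (x' : Matrix m k ℝ) (h : x'ᵀ * x' = 1) :
    ((1 + (0:ℝ)) • (1 : Matrix m m ℝ) - x' * x'ᵀ).PosSemidef := by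
  classical
  have hP : (x' * x'ᵀ) * (x' * x'ᵀ) = x' * x'ᵀ := by
    rw [Matrix.mul_assoc, ← Matrix.mul_assoc x'ᵀ, h, Matrix.one_mul]
  have key : (1 + (0:ℝ)) • (1 : Matrix m m ℝ) - x' * x'ᵀ
      = ((1 : Matrix m m ℝ) - x' * x'ᵀ)ᵀ * ((1 : Matrix m m ℝ) - x' * x'ᵀ) := by
    rw [Matrix.transpose_sub, Matrix.transpose_one, Matrix.transpose_mul,
      Matrix.transpose_transpose, Matrix.sub_mul, Matrix.mul_sub, Matrix.mul_sub,
      Matrix.one_mul, Matrix.mul_one, hP]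
    simp
  rw [key, ← conjT]
  exact Matrix.posSemidef_conjTranspose_mul_self _

/-- Key estimate: if `B Bᵀ ⪯ (1+ε) I` then `‖A B‖_F ≤ √(1+ε) ‖A‖_F`. -/
lemma fnorm_mul_le_sqrt {ε : ℝ} (hε : 0 ≤ ε) (A : Matrix m p ℝ) (B : Matrix p q ℝ)
    (h : ((1 + ε) • (1 : Matrix p p ℝ) - B * Bᵀ).PosSemidef) :
    fnorm (A * B) ≤ Real.sqrt (1 + ε) * fnorm A := by
  classical
  have hc : (0:ℝ) ≤ 1 + ε := by linarith
  have h1 : fnorm (A * B) ^ 2 ≤ (1 + ε) * fnorm A ^ 2 := by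
    rw [fnorm_sq, fnorm_sq, finner, finner]
    have e1 : (A * B) * (A * B)ᵀ = A * (B * Bᵀ) * Aᵀ := by
      rw [Matrix.transpose_mul]; simp only [Matrix.mul_assoc]
    have e2 : Matrix.trace (A * (B * Bᵀ) * Aᵀ) = Matrix.trace ((Aᵀ * A) * (B * Bᵀ)) := by
      rw [Matrix.trace_mul_cycle]
    have hpsd : (Aᵀ * A).PosSemidef := by
      have := Matrix.posSemidef_conjTranspose_mul_self A
      rwa [conjT] at this
    have h3 : 0 ≤ Matrix.trace ((Aᵀ * A) * ((1 + ε) • (1 : Matrix p p ℝ) - B * Bᵀ)) :=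
      trace_mul_nonneg hpsd h
    have h4 : Matrix.trace ((Aᵀ * A) * ((1 + ε) • (1 : Matrix p p ℝ) - B * Bᵀ))
        = (1 + ε) * Matrix.trace (Aᵀ * A) - Matrix.trace ((Aᵀ * A) * (B * Bᵀ)) := by
      rw [Matrix.mul_sub, Matrix.trace_sub, Matrix.mul_smul, Matrix.mul_one,
        Matrix.trace_smul]
      simp
    have h5 : Matrix.trace (A * Aᵀ) = Matrix.trace (Aᵀ * A) := Matrix.trace_mul_comm _ _
    rw [e1, e2, h5]
    linarith
  have h2 := Real.sqrt_le_sqrt h1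
  rw [Real.sqrt_sq (fnorm_nonneg _), Real.sqrt_mul hc, Real.sqrt_sq (fnorm_nonneg _)] at h2
  exact h2

end Aux

/-- Let `ε ∈ (0, 3/4)` and let `f` be differentiable with `L̂`-Lipschitz
Euclidean gradient `Df = ∇f`, and `‖∇f(u)‖_F ≤ L̂` for all `u ∈ St(d,r)^ε`. Then for every
`x ∈ St(d,r)^ε` with `x' = Proj_St(x)`,
`‖grad f(x) − grad f(x')‖_F ≤ (3 + 2ε) L̂ ‖x − x'‖_F`. -/
theorem rgrad_lipschitz_to_polar {d r : ℕ} (ε Lhat : ℝ)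
    (hε : ε ∈ Set.Ioo (0 : ℝ) (3 / 4))
    (Df : Matrix (Fin d) (Fin r) ℝ → Matrix (Fin d) (Fin r) ℝ)
    (hLip : ∀ u v : Matrix (Fin d) (Fin r) ℝ, fnorm (Df u - Df v) ≤ Lhat * fnorm (u - v))
    (hBnd : ∀ u ∈ StEps d r ε, fnorm (Df u) ≤ Lhat)
    (x x' : Matrix (Fin d) (Fin r) ℝ) (hx : x ∈ StEps d r ε) (hpf : IsPolarFactor x x') :
    fnorm (rgrad Df x - rgrad Df x') ≤ (3 + 2 * ε) * Lhat * fnorm (x - x') := by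
  obtain ⟨hε0, hε34⟩ := hε
  obtain ⟨hx'1, P, hP, hxP⟩ := hpf
  set G := Df x with hG
  set G' := Df x' with hG'
  set D := fnorm (x - x') with hDdef
  have hD : 0 ≤ D := fnorm_nonneg _
  have hL : 0 ≤ Lhat := le_trans (fnorm_nonneg _) (hBnd x hx)
  -- x' is in the safety region
  have hx' : x' ∈ StEps d r ε := by
    show fnorm (x'ᵀ * x' - 1) ≤ ε
    rw [hx'1, sub_self]
    rw [fnorm_zero]; linarith
  -- spectral bounds
  have hxpsd : ((1 + ε) • (1 : Matrix (Fin r) (Fin r) ℝ) - xᵀ * (xᵀ)ᵀ).PosSemidef := by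
    rw [Matrix.transpose_transpose]
    refine psd_shift ?_ hx
    rw [Matrix.transpose_mul, Matrix.transpose_transpose]
  have hx'psd : ((1 + (0:ℝ)) • (1 : Matrix (Fin d) (Fin d) ℝ) - x' * x'ᵀ).PosSemidef :=
    psd_one_sub_proj x' hx'1
  set s := Real.sqrt (1 + ε) with hs
  have hs0 : 0 ≤ s := Real.sqrt_nonneg _
  have hs1 : s ≤ 1 + ε := by
    rw [hs]
    have h1 : (1 + ε) ≤ (1 + ε) ^ 2 := by nlinarith
    have := Real.sqrt_le_sqrt h1
    rwa [Real.sqrt_sq (by linarith : (0:ℝ) ≤ 1 + ε)] at this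
  -- bound on skew(G xᵀ)
  have bndGx : fnorm (mskew (G * xᵀ)) ≤ s * Lhat := by
    refine le_trans (fnorm_mskew_le _) ?_
    refine le_trans (fnorm_mul_le_sqrt (le_of_lt hε0) G xᵀ hxpsd) ?_
    exact mul_le_mul_of_nonneg_left (hBnd x hx) hs0
  -- bound on the difference of skews
  have bndDelta : fnorm (mskew (G * xᵀ) - mskew (G' * x'ᵀ)) ≤ s * (Lhat * D) + Lhat * D := by
    rw [mskew_sub]
    have edec : G * xᵀ - G' * x'ᵀ = (G - G') * xᵀ + G' * (x - x')ᵀ := by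
      rw [Matrix.transpose_sub, Matrix.sub_mul, Matrix.mul_sub]
      abel
    rw [edec, mskew_add]
    refine le_trans (fnorm_add_le _ _) ?_
    have t1 : fnorm (mskew ((G - G') * xᵀ)) ≤ s * (Lhat * D) := by
      refine le_trans (fnorm_mskew_le _) ?_
      refine le_trans (fnorm_mul_le_sqrt (le_of_lt hε0) (G - G') xᵀ hxpsd) ?_
      exact mul_le_mul_of_nonneg_left (hLip x x') hs0
    have t2 : fnorm (mskew (G' * (x - x')ᵀ)) ≤ Lhat * D := by
      refine le_trans (fnorm_mskew_le _) ?_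
      refine le_trans (fnorm_mul_le _ _) ?_
      rw [fnorm_transpose]
      exact mul_le_mul_of_nonneg_right (hBnd x' hx') hD
    linarith
  -- decomposition
  have hdec : rgrad Df x - rgrad Df x'
      = mskew (G * xᵀ) * (x - x') + (mskew (G * xᵀ) - mskew (G' * x'ᵀ)) * x' := by
    rw [rgrad, rgrad, Matrix.mul_sub, Matrix.sub_mul, ← hG, ← hG']
    abel
  rw [hdec]
  refine le_trans (fnorm_add_le _ _) ?_
  have b1 : fnorm (mskew (G * xᵀ) * (x - x')) ≤ s * Lhat * D := by
    refine le_trans (fnorm_mul_le _ _) ?_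
    exact mul_le_mul_of_nonneg_right bndGx hD
  have b2 : fnorm ((mskew (G * xᵀ) - mskew (G' * x'ᵀ)) * x') ≤ s * (Lhat * D) + Lhat * D := by
    have := fnorm_mul_le_sqrt le_rfl (mskew (G * xᵀ) - mskew (G' * x'ᵀ)) x' hx'psd
    rw [show (1:ℝ) + 0 = 1 by norm_num, Real.sqrt_one, one_mul] at this
    exact le_trans this bndDelta
  have hLD : 0 ≤ Lhat * D := mul_nonneg hL hD
  nlinarith [mul_le_mul_of_nonneg_right hs1 hLD]

end DRFGT
end
end

section
/- Let W ∈ ℝ^{n×n} be symmetric doubly stochastic with second-largest singular value σ_W < 1, let α > 0, L' > 0, and let Λ_i : ℝ^{d×r} → ℝ^{d×r} be L'-Lipschitz for each i ∈ [n]. Suppose x_{i,k} = Σ_j W_{ij} x_{j,k−1} − α y_{i,k−1} and y_{i,k} = Σ_j W_{ij} y_{j,k−1} + Λ_i(x_{i,k}) − Λ_i(x_{i,k−1}). Then ‖𝐲_k − 𝐲̄_k‖_F² ≤ ((1+σ_W²)/2 + 4L'²α²(1+σ_W²)/(1−σ_W²)) ‖𝐲_{k−1} − 𝐲̄_{k−1}‖_F²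 + 8L'²((1+σ_W²)/(1−σ_W²)) ‖𝐱_{k−1} − 𝐱̄_{k−1}‖_F² + 4L'²α²((1+σ_W²)/(1−σ_W²)) ‖𝐲̄_{k−1}‖_F², where ‖𝐲̄_{k−1}‖_F² = n‖ȳ_{k−1}‖_F². -/
open Matrix BigOperators Finset

noncomputable section

namespace DRFGT

private def toS {n d r : ℕ} (z : Fin n → Matrix (Fin d) (Fin r) ℝ) :
    EuclideanSpace ℝ (Fin n × Fin d × Fin r) :=
  WithLp.toLp 2 (fun p : Fin n × Fin d × Fin r => z p.1 p.2.1 p.2.2)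

private lemma fnorm_sq_s11 {d r : ℕ} (A : Matrix (Fin d) (Fin r) ℝ) :
    fnorm A ^ 2 = ∑ i, ∑ j, A i j ^ 2 := by
  have h : finner A A = ∑ i, ∑ j, A i j ^ 2 := by
    simp [finner, Matrix.trace, Matrix.mul_apply, Matrix.diag, sq]
  rw [fnorm, Real.sq_sqrt (by rw [h]; positivity), h]

private lemma fnorm_nonneg_s11 {d r : ℕ} (A : Matrix (Fin d) (Fin r) ℝ) : 0 ≤ fnorm A :=
  Real.sqrt_nonneg _

private lemma snorm_nonneg {n d r : ℕ} (z : Fin n → Matrix (Fin d) (Fin r) ℝ) :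
    0 ≤ snorm z := Real.sqrt_nonneg _

private lemma snorm_eq_norm {n d r : ℕ} (z : Fin n → Matrix (Fin d) (Fin r) ℝ) :
    snorm z = ‖toS z‖ := by
  rw [snorm, EuclideanSpace.norm_eq]
  congr 1
  rw [Fintype.sum_prod_type]
  refine Finset.sum_congr rfl fun i _ => ?_
  rw [fnorm_sq_s11, Fintype.sum_prod_type]
  simp [toS, Real.norm_eq_abs, sq_abs]

private lemma sum_sub_mean_sq_le {n : ℕ} (v : Fin n → ℝ) :
    ∑ i, (v i - (n:ℝ)⁻¹ * ∑ j, v j) ^ 2 ≤ ∑ i, (v i) ^ 2 := by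
  rcases Nat.eq_zero_or_pos n with h | h
  · subst h; simp
  have hn : (0:ℝ) < n := by exact_mod_cast h
  have hexp : ∑ i, (v i - (n:ℝ)⁻¹ * ∑ j, v j) ^ 2
      = (∑ i, (v i)^2) - (n:ℝ)⁻¹ * (∑ j, v j)^2 := by
    have h1 : ∀ i ∈ Finset.univ, (v i - (n:ℝ)⁻¹ * ∑ j, v j) ^ 2
        = (v i)^2 - (2*(n:ℝ)⁻¹ * ∑ j, v j) * v i + ((n:ℝ)⁻¹ * ∑ j, v j)^2 := by
      intro i _; ring
    rw [Finset.sum_congr rfl h1, Finset.sum_add_distrib, Finset.sum_sub_distrib,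
      ← Finset.mul_sum, Finset.sum_const, Finset.card_univ, Fintype.card_fin,
      nsmul_eq_mul]
    field_simp
    ring
  rw [hexp]
  have h2 : 0 ≤ (n:ℝ)⁻¹ * (∑ j, v j)^2 := by positivity
  linarith

private lemma key_ineq (s A B : ℝ) (hs0 : 0 ≤ s) (hs1 : s < 1) :
    (s * A + B) ^ 2 ≤ (1 + s^2)/2 * A^2 + (1 + s^2)/(1 - s^2) * B^2 := by
  have h1 : 0 < 1 - s^2 := by nlinarith
  rw [← sub_nonneg]
  have hexp : (1 + s^2)/2 * A^2 + (1 + s^2)/(1 - s^2) * B^2 - (s * A + B)^2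
      = ((1 - s^2) * A - 2 * s * B)^2 / (2 * (1 - s^2)) := by
    field_simp
    ring
  rw [hexp]
  positivity

/-- consensus error on `𝐲`. For a symmetric doubly stochastic `W` with
averaging contraction factor `σ_W < 1`, `L'`-Lipschitz maps `Λ_i`, and the updates
`x_{i,k} = Σⱼ W_{ij} x_{j,k−1} − α y_{i,k−1}`,
`y_{i,k} = Σⱼ W_{ij} y_{j,k−1} + Λ_i(x_{i,k}) − Λ_i(x_{i,k−1})`, the consensus error on `𝐲`
satisfies the stated inequality, where `‖𝐲̄_{k−1}‖_F² = n‖ȳ_{k−1}‖_F²`. -/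
theorem consensus_error_y {n d r : ℕ} (σW α L' : ℝ)
    (hσ0 : 0 ≤ σW) (hσ1 : σW < 1) (hα : 0 < α) (hL' : 0 < L')
    (W : Matrix (Fin n) (Fin n) ℝ)
    (hWsym : Wᵀ = W) (hWnn : ∀ i j, 0 ≤ W i j) (hWrow : ∀ i, ∑ j, W i j = 1)
    (hWcontract : ∀ z : Fin n → Matrix (Fin d) (Fin r) ℝ,
      snorm (fun i => (∑ j, W i j • z j) - avg z) ≤ σW * snorm (fun i => z i - avg z))
    (Lam : Fin n → Matrix (Fin d) (Fin r) ℝ → Matrix (Fin d) (Fin r) ℝ)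
    (hLip : ∀ i, ∀ u v : Matrix (Fin d) (Fin r) ℝ,
      fnorm (Lam i u - Lam i v) ≤ L' * fnorm (u - v))
    (xp yp xc yc : Fin n → Matrix (Fin d) (Fin r) ℝ)
    (hxc : ∀ i, xc i = (∑ j, W i j • xp j) - α • yp i)
    (hyc : ∀ i, yc i = (∑ j, W i j • yp j) + Lam i (xc i) - Lam i (xp i)) :
    snorm (fun i => yc i - avg yc) ^ 2 ≤
      ((1 + σW ^ 2) / 2 + 4 * L' ^ 2 * α ^ 2 * ((1 + σW ^ 2) / (1 - σW ^ 2)))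
          * snorm (fun i => yp i - avg yp) ^ 2
        + 8 * L' ^ 2 * ((1 + σW ^ 2) / (1 - σW ^ 2)) * snorm (fun i => xp i - avg xp) ^ 2
        + 4 * L' ^ 2 * α ^ 2 * ((1 + σW ^ 2) / (1 - σW ^ 2))
          * snorm (fun _ : Fin n => avg yp) ^ 2 := by
  have h1σ : 0 < 1 - σW ^ 2 := by nlinarith
  set u : Fin n → Matrix (Fin d) (Fin r) ℝ := fun i => Lam i (xc i) - Lam i (xp i) with hu
  set Y := snorm (fun i => yp i - avg yp) with hYdef
  set X := snorm (fun i => xp i - avg xp) with hXdef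
  set N := snorm (fun _ : Fin n => avg yp) with hNdef
  have hY0 : 0 ≤ Y := snorm_nonneg _
  have hX0 : 0 ≤ X := snorm_nonneg _
  have hN0 : 0 ≤ N := snorm_nonneg _
  -- column sums
  have hcol : ∀ j, ∑ i, W i j = 1 := by
    intro j
    calc ∑ i, W i j = ∑ i, W j i := by
          refine Finset.sum_congr rfl fun i _ => ?_
          exact (congrFun (congrFun hWsym j) i).symm ▸ rfl
      _ = 1 := hWrow j
  -- yc i = Wy i + u i
  have hyc' : ∀ i, yc i = (∑ j, W i j • yp j) + u i := by
    intro i; rw [hyc i, hu]; abel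
  -- avg yc = avg yp + avg u
  have hycavg : avg yc = avg yp + avg u := by
    have h2 : ∑ i, (∑ j, W i j • yp j) = ∑ j, yp j := by
      rw [Finset.sum_comm]
      refine Finset.sum_congr rfl fun j _ => ?_
      rw [← Finset.sum_smul, hcol j, one_smul]
    have h3 : ∑ i, yc i = (∑ j, yp j) + ∑ i, u i := by
      rw [Finset.sum_congr rfl fun i _ => hyc' i, Finset.sum_add_distrib, h2]
    simp only [avg]
    rw [h3, smul_add]
  -- pointwise decomposition
  have hpt : (fun i => yc i - avg yc)
      = fun i => ((∑ j, W i j • yp j) - avg yp) + (u i - avg u) := by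
    funext i
    rw [hyc' i, hycavg]; abel
  -- split
  set Bv := snorm (fun i => u i - avg u) with hBvdef
  have hBv0 : 0 ≤ Bv := snorm_nonneg _
  have hT : snorm (fun i => yc i - avg yc) ≤ σW * Y + Bv := by
    rw [hpt, snorm_eq_norm]
    have e : toS (fun i => ((∑ j, W i j • yp j) - avg yp) + (u i - avg u))
        = toS (fun i => (∑ j, W i j • yp j) - avg yp) + toS (fun i => u i - avg u) := rfl
    rw [e]
    calc ‖toS (fun i => (∑ j, W i j • yp j) - avg yp) + toS (fun i => u i - avg u)‖
        ≤ ‖toS (fun i => (∑ j, W i j • yp j) - avg yp)‖ + ‖toS (fun i => u i - avg u)‖ :=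
          norm_add_le _ _
      _ = snorm (fun i => (∑ j, W i j • yp j) - avg yp) + Bv := by
          rw [← snorm_eq_norm, ← snorm_eq_norm, hBvdef]
      _ ≤ σW * Y + Bv := by
          have := hWcontract yp
          rw [← hYdef] at this
          linarith
  -- mean subtraction is nonexpansive
  have hmean : Bv ≤ snorm u := by
    rw [hBvdef]
    simp only [snorm]
    apply Real.sqrt_le_sqrt
    simp only [fnorm_sq_s11]
    have havg : ∀ j k, avg u j k = (n:ℝ)⁻¹ * ∑ i, u i j k := by
      intro j k
      simp [avg, Matrix.sum_apply, Matrix.smul_apply, smul_eq_mul]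
    rw [Finset.sum_comm]
    conv_rhs => rw [Finset.sum_comm]
    refine Finset.sum_le_sum fun j _ => ?_
    rw [Finset.sum_comm]
    conv_rhs => rw [Finset.sum_comm]
    refine Finset.sum_le_sum fun k _ => ?_
    have := sum_sub_mean_sq_le (fun i => u i j k)
    simpa [Matrix.sub_apply, havg j k] using this
  -- Lipschitz
  have hlipS : snorm u ≤ L' * snorm (fun i => xc i - xp i) := by
    have h1 : ∀ i, fnorm (u i) ^ 2 ≤ L'^2 * fnorm (xc i - xp i)^2 := by
      intro i
      have h2 := hLip i (xc i) (xp i)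
      have h0 := fnorm_nonneg_s11 (u i)
      calc fnorm (u i) ^ 2 ≤ (L' * fnorm (xc i - xp i))^2 := by
            apply pow_le_pow_left₀ h0
            simpa [hu] using h2
        _ = L'^2 * fnorm (xc i - xp i)^2 := by ring
    simp only [snorm]
    rw [show L' * Real.sqrt (∑ i, fnorm (xc i - xp i)^2)
        = Real.sqrt (L'^2 * ∑ i, fnorm (xc i - xp i)^2) by
      rw [Real.sqrt_mul (sq_nonneg L'), Real.sqrt_sq hL'.le]]
    apply Real.sqrt_le_sqrt
    rw [Finset.mul_sum]
    exact Finset.sum_le_sum fun i _ => h1 i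
  -- bound on snorm (xc - xp)
  set Q := snorm (fun i => xc i - xp i) with hQdef
  have hQ0 : 0 ≤ Q := snorm_nonneg _
  have hQ : Q ≤ σW * X + X + α * Y + α * N := by
    have hdec : (fun i => xc i - xp i)
        = fun i => (((∑ j, W i j • xp j) - avg xp) - (xp i - avg xp))
            - α • (yp i - avg yp) - α • (avg yp) := by
      funext i
      rw [hxc i]
      module
    rw [hQdef, hdec, snorm_eq_norm]
    have e : toS (fun i => (((∑ j, W i j • xp j) - avg xp) - (xp i - avg xp))
            - α • (yp i - avg yp) - α • (avg yp))
        = ((toS (fun i => (∑ j, W i j • xp j) - avg xp)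
            - toS (fun i => xp i - avg xp))
            - α • toS (fun i => yp i - avg yp)) - α • toS (fun _ => avg yp) := rfl
    rw [e]
    have hA1 : ‖toS (fun i => (∑ j, W i j • xp j) - avg xp)‖ ≤ σW * X := by
      rw [← snorm_eq_norm]
      have := hWcontract xp
      rw [← hXdef] at this
      exact this
    have hB1 : ‖toS (fun i => xp i - avg xp)‖ = X := (snorm_eq_norm _).symm
    have hC1 : ‖α • toS (fun i => yp i - avg yp)‖ = α * Y := by
      rw [norm_smul, Real.norm_eq_abs, abs_of_pos hα, ← snorm_eq_norm]
    have hD1 : ‖α • toS (fun _ : Fin n => avg yp)‖ = α * N := by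
      rw [norm_smul, Real.norm_eq_abs, abs_of_pos hα, ← snorm_eq_norm]
    calc ‖((toS (fun i => (∑ j, W i j • xp j) - avg xp)
            - toS (fun i => xp i - avg xp))
            - α • toS (fun i => yp i - avg yp)) - α • toS (fun _ => avg yp)‖
        ≤ ‖(toS (fun i => (∑ j, W i j • xp j) - avg xp)
            - toS (fun i => xp i - avg xp))
            - α • toS (fun i => yp i - avg yp)‖ + ‖α • toS (fun _ : Fin n => avg yp)‖ :=
          norm_sub_le _ _
      _ ≤ (‖toS (fun i => (∑ j, W i j • xp j) - avg xp)
            - toS (fun i => xp i - avg xp)‖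
            + ‖α • toS (fun i => yp i - avg yp)‖) + ‖α • toS (fun _ : Fin n => avg yp)‖ := by
          gcongr; exact norm_sub_le _ _
      _ ≤ ((‖toS (fun i => (∑ j, W i j • xp j) - avg xp)‖
            + ‖toS (fun i => xp i - avg xp)‖)
            + ‖α • toS (fun i => yp i - avg yp)‖) + ‖α • toS (fun _ : Fin n => avg yp)‖ := by
          gcongr; exact norm_sub_le _ _
      _ ≤ σW * X + X + α * Y + α * N := by
          rw [hB1, hC1, hD1]; linarith
  -- square bounds
  clear_value u Y X N Bv Q
  have hQ2 : Q^2 ≤ 8*X^2 + 4*α^2*Y^2 + 4*α^2*N^2 := by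
    have h := pow_le_pow_left₀ hQ0 hQ 2
    nlinarith [sq_nonneg (σW*X - X), sq_nonneg (σW*X - α*Y), sq_nonneg (σW*X - α*N),
      sq_nonneg (X - α*Y), sq_nonneg (X - α*N), sq_nonneg (α*Y - α*N),
      mul_nonneg (mul_nonneg h1σ.le hX0) hX0]
  have hBvQ : Bv ≤ L' * Q := le_trans hmean hlipS
  have hBv2 : Bv^2 ≤ L'^2 * (8*X^2 + 4*α^2*Y^2 + 4*α^2*N^2) := by
    calc Bv^2 ≤ (L' * Q)^2 := pow_le_pow_left₀ hBv0 hBvQ 2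
      _ = L'^2 * Q^2 := by ring
      _ ≤ L'^2 * (8*X^2 + 4*α^2*Y^2 + 4*α^2*N^2) :=
          mul_le_mul_of_nonneg_left hQ2 (sq_nonneg L')
  have hT2 : snorm (fun i => yc i - avg yc)^2
      ≤ (1+σW^2)/2 * Y^2 + (1+σW^2)/(1-σW^2) * Bv^2 := by
    have h := pow_le_pow_left₀ (snorm_nonneg _) hT 2
    exact le_trans h (key_ineq σW Y Bv hσ0 hσ1)
  have hK0 : 0 ≤ (1+σW^2)/(1-σW^2) := div_nonneg (by positivity) h1σ.le
  calc snorm (fun i => yc i - avg yc)^2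
      ≤ (1+σW^2)/2 * Y^2 + (1+σW^2)/(1-σW^2) * Bv^2 := hT2
    _ ≤ (1+σW^2)/2 * Y^2
        + (1+σW^2)/(1-σW^2) * (L'^2 * (8*X^2 + 4*α^2*Y^2 + 4*α^2*N^2)) := by
        exact add_le_add le_rfl (mul_le_mul_of_nonneg_left hBv2 hK0)
    _ = ((1 + σW ^ 2) / 2 + 4 * L' ^ 2 * α ^ 2 * ((1 + σW ^ 2) / (1 - σW ^ 2))) * Y ^ 2
        + 8 * L' ^ 2 * ((1 + σW ^ 2) / (1 - σW ^ 2)) * X ^ 2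
        + 4 * L' ^ 2 * α ^ 2 * ((1 + σW ^ 2) / (1 - σW ^ 2)) * N ^ 2 := by ring

end DRFGT
end
end
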